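/- The sequence Δ_{1,2}, Δ_{2,3}, ..., Δ_{n-1,n} of consecutive 2×2 minors of the generic 2×n matrix is a regular sequence in k[x_1,...,x_n, y_1,...,y_n]. -/

import Mathlib

open MvPolynomial

noncomputable def xv (k : Type*) [Field k] (n : ℕ) (i : Fin n) :
    MvPolynomial (Fin n ⊕ Fin n) k := X (Sum.inl i)

noncomputable def yv (k : Type*) [Field k] (n : ℕ) (i : Fin n) :
    MvPolynomial (Fin n ⊕ Fin n) k := X (Sum.inr i)

/-- The 2×2 minor `Δ_{a,b} = x_a y_b - x_b y_a` of the generic `2 × n` matrix. -/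
noncomputable def Δ (k : Type*) [Field k] (n : ℕ) (a b : Fin n) :
    MvPolynomial (Fin n ⊕ Fin n) k := xv k n a * yv k n b - xv k n b * yv k n a

/-- The list `Δ_{1,2}, Δ_{2,3}, …, Δ_{n-1,n}` of consecutive minors
(in 0-based indexing, `Δ_{t,t+1}` for `t = 0, …, n-2`). -/
noncomputable def consList (k : Type*) [Field k] (n : ℕ) :
    List (MvPolynomial (Fin n ⊕ Fin n) k) :=
  List.ofFn fun t : Fin (n - 1) =>
    Δ k n ⟨t.1, by have := t.isLt; omega⟩ ⟨t.1 + 1, by have := t.isLt; omega⟩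

namespace Stmt3Aux


variable {k : Type*} [Field k]

/-- `t mod n` as an element of `Fin n`. -/
def fi (n : ℕ) (hn : 0 < n) (t : ℕ) : Fin n := ⟨t % n, Nat.mod_lt _ hn⟩

lemma fi_val {n : ℕ} (hn : 0 < n) {t : ℕ} (ht : t < n) : (fi n hn t : ℕ) = t := by
  simp [fi, Nat.mod_eq_of_lt ht]

/-- the weight function : `x_i` has weight `n - i`, `y_i` has weight 0. -/
def wt (n : ℕ) : Fin n ⊕ Fin n → ℕ := Sum.elim (fun i => n - i.1) (fun _ => 0)

/-- exponent of the monomial `x_t y_{t+1}`. -/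
noncomputable def EM (n : ℕ) (hn : 0 < n) (t : ℕ) : (Fin n ⊕ Fin n) →₀ ℕ :=
  Finsupp.single (Sum.inl (fi n hn t)) 1 + Finsupp.single (Sum.inr (fi n hn (t + 1))) 1

/-- exponent of the monomial `x_{t+1} y_t`. -/
noncomputable def EN (n : ℕ) (hn : 0 < n) (t : ℕ) : (Fin n ⊕ Fin n) →₀ ℕ :=
  Finsupp.single (Sum.inl (fi n hn (t + 1))) 1 + Finsupp.single (Sum.inr (fi n hn t)) 1

variable (k) in
noncomputable def Mp (n : ℕ) (hn : 0 < n) (t : ℕ) : MvPolynomial (Fin n ⊕ Fin n) k :=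
  monomial (EM n hn t) 1

variable (k) in
noncomputable def Np (n : ℕ) (hn : 0 < n) (t : ℕ) : MvPolynomial (Fin n ⊕ Fin n) k :=
  monomial (EN n hn t) 1

variable (k) in
noncomputable def Dp (n : ℕ) (hn : 0 < n) (t : ℕ) : MvPolynomial (Fin n ⊕ Fin n) k :=
  Mp k n hn t - Np k n hn t

lemma weight_single_one {n : ℕ} (i : Fin n ⊕ Fin n) :
    Finsupp.weight (wt n) (Finsupp.single i 1) = wt n i := by
  simp [Finsupp.weight_apply, Finsupp.sum_single_index]

lemma weight_EM {n : ℕ} (hn : 0 < n) {t : ℕ} (ht : t + 1 < n) :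
    Finsupp.weight (wt n) (EM n hn t) = n - t := by
  rw [EM, map_add, weight_single_one, weight_single_one]
  simp [wt, fi_val hn (by omega : t < n)]

lemma weight_EN {n : ℕ} (hn : 0 < n) {t : ℕ} (ht : t + 1 < n) :
    Finsupp.weight (wt n) (EN n hn t) = n - (t + 1) := by
  rw [EN, map_add, weight_single_one, weight_single_one]
  simp [wt, fi_val hn ht]

lemma Mp_hom {n : ℕ} (hn : 0 < n) {t : ℕ} (ht : t + 1 < n) :
    IsWeightedHomogeneous (wt n) (Mp k n hn t) (n - t) :=
  isWeightedHomogeneous_monomial _ _ _ (weight_EM hn ht)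

lemma Np_hom {n : ℕ} (hn : 0 < n) {t : ℕ} (ht : t + 1 < n) :
    IsWeightedHomogeneous (wt n) (Np k n hn t) (n - (t + 1)) :=
  isWeightedHomogeneous_monomial _ _ _ (weight_EN hn ht)

lemma Mp_ne_zero {n : ℕ} (hn : 0 < n) (t : ℕ) : Mp k n hn t ≠ 0 := by
  intro h
  have := congrArg (coeff (EM n hn t)) h
  simp [Mp, coeff_monomial] at this


variable {k : Type*} [Field k] {σ : Type*}

/-- component of `p * q` when `q` is homogeneous: matched degree. -/
lemma comp_mul_homog {w : σ → ℕ} {q : MvPolynomial σ k} {e : ℕ}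
    (hq : IsWeightedHomogeneous w q e) (p : MvPolynomial σ k) (j : ℕ) :
    weightedHomogeneousComponent w (e + j) (p * q) =
      weightedHomogeneousComponent w j p * q := by
  conv_lhs => rw [p.as_sum]
  rw [Finset.sum_mul, map_sum]
  rw [show weightedHomogeneousComponent w j p
      = ∑ u ∈ p.support, weightedHomogeneousComponent w j (monomial u (coeff u p)) by
    rw [← map_sum, ← p.as_sum]]
  rw [Finset.sum_mul]
  refine Finset.sum_congr rfl fun u _ => ?_
  have hmon : IsWeightedHomogeneous w (monomial u (coeff u p)) (Finsupp.weight w u) :=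
    isWeightedHomogeneous_monomial _ _ _ rfl
  have hm2 : IsWeightedHomogeneous w (monomial u (coeff u p) * q)
      (Finsupp.weight w u + e) := hmon.mul hq
  by_cases hu : Finsupp.weight w u = j
  · rw [show e + j = Finsupp.weight w u + e by omega]
    rw [hm2.weightedHomogeneousComponent_same]
    subst hu
    rw [hmon.weightedHomogeneousComponent_same]
  · rw [hm2.weightedHomogeneousComponent_ne (e + j) (by omega),
      hmon.weightedHomogeneousComponent_ne j (fun h => hu h.symm), zero_mul]

/-- component of `p * q` in degree below the degree of homogeneous `q` vanishes. -/
lemma comp_mul_homog_lt {w : σ → ℕ} {q : MvPolynomial σ k} {e : ℕ}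
    (hq : IsWeightedHomogeneous w q e) (p : MvPolynomial σ k) {d : ℕ} (hd : d < e) :
    weightedHomogeneousComponent w d (p * q) = 0 := by
  conv_lhs => rw [p.as_sum, Finset.sum_mul, map_sum]
  refine Finset.sum_eq_zero fun u _ => ?_
  have hmon : IsWeightedHomogeneous w (monomial u (coeff u p)) (Finsupp.weight w u) :=
    isWeightedHomogeneous_monomial _ _ _ rfl
  exact (hmon.mul hq).weightedHomogeneousComponent_ne d (by omega)

/-- if all monomials of `p` have weight `≤ D`, components above `D` vanish -/
lemma comp_eq_zero_of_bound {w : σ → ℕ} {p : MvPolynomial σ k} {D : ℕ}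
    (h : ∀ u ∈ p.support, Finsupp.weight w u ≤ D) {d : ℕ} (hd : D < d) :
    weightedHomogeneousComponent w d p = 0 :=
  weightedHomogeneousComponent_eq_zero' _ _ fun u hu => by have := h u hu; omega

lemma support_comp_subset {w : σ → ℕ} (p : MvPolynomial σ k) (d : ℕ) :
    (weightedHomogeneousComponent w d p).support ⊆ p.support := by
  classical
  intro u hu
  rw [MvPolynomial.mem_support_iff, coeff_weightedHomogeneousComponent] at hu
  rw [MvPolynomial.mem_support_iff]
  by_cases h : Finsupp.weight w u = d
  · rwa [if_pos h] at hu
  · rw [if_neg h] at hu; exact absurd rfl hu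

lemma comp_idem {w : σ → ℕ} (p : MvPolynomial σ k) (d : ℕ) :
    weightedHomogeneousComponent w d (weightedHomogeneousComponent w d p) =
      weightedHomogeneousComponent w d p :=
  (weightedHomogeneousComponent_isWeightedHomogeneous d p).weightedHomogeneousComponent_same

/-- membership in the span of a family indexed by `range m`. -/
lemma mem_span_iff {R : Type*} [CommRing R] {f : ℕ → R} {m : ℕ} {x : R} :
    x ∈ Ideal.span {p | ∃ t, t < m ∧ p = f t} ↔
      ∃ a : ℕ → R, x = ∑ t ∈ Finset.range m, a t * f t := by
  have hset : {p | ∃ t, t < m ∧ p = f t} = Set.range (fun i : Fin m => f i.1) := by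
    ext p
    constructor
    · rintro ⟨t, ht, rfl⟩; exact ⟨⟨t, ht⟩, rfl⟩
    · rintro ⟨i, rfl⟩; exact ⟨i.1, i.2, rfl⟩
  rw [hset, Ideal.span, Submodule.mem_span_range_iff_exists_fun]
  constructor
  · rintro ⟨c, hc⟩
    refine ⟨fun t => if h : t < m then c ⟨t, h⟩ else 0, ?_⟩
    rw [← hc, ← Fin.sum_univ_eq_sum_range (fun t => (if h : t < m then c ⟨t, h⟩ else 0) * f t) m]
    refine (Finset.sum_congr rfl fun i _ => ?_)
    rw [dif_pos i.2, smul_eq_mul]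
  · rintro ⟨a, rfl⟩
    refine ⟨fun i => a i.1, ?_⟩
    rw [← Fin.sum_univ_eq_sum_range (fun t => a t * f t) m]
    exact Finset.sum_congr rfl fun i _ => smul_eq_mul ..


lemma fi_inj {n : ℕ} (hn : 0 < n) {a b : ℕ} (ha : a < n) (hb : b < n) (h : a ≠ b) :
    fi n hn a ≠ fi n hn b := by
  intro hc; apply h
  have := congrArg Fin.val hc
  rwa [fi_val hn ha, fi_val hn hb] at this

lemma EM_disj {n : ℕ} (hn : 0 < n) {t t0 : ℕ} (ht : t + 1 < n) (ht0 : t0 + 1 < n)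
    (hne : t ≠ t0) : ∀ i, EM n hn t i ≠ 0 → EM n hn t0 i = 0 := by
  have h1 : fi n hn t0 ≠ fi n hn t := fi_inj hn (by omega) (by omega) (Ne.symm hne)
  have h2 : fi n hn (t0+1) ≠ fi n hn (t+1) := fi_inj hn ht0 ht (by omega)
  intro i hi
  rcases i with j | j
  · have hj : fi n hn t = j := by
      by_contra hj
      simp [EM, Finsupp.single_apply, hj] at hi
    subst hj
    simp [EM, Finsupp.single_apply, h1]
  · have hj : fi n hn (t+1) = j := by
      by_contra hj
      simp [EM, Finsupp.single_apply, hj] at hi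
    subst hj
    simp [EM, Finsupp.single_apply, h2]

/-- The monomial ideal generated by `x_t y_{t+1}`, `t < m`. -/
noncomputable def Jid (k : Type*) [Field k] (n : ℕ) (hn : 0 < n) (m : ℕ) :
    Ideal (MvPolynomial (Fin n ⊕ Fin n) k) :=
  Ideal.span {q | ∃ t, t < m ∧ q = Mp k n hn t}

lemma Jid_eq_image (n : ℕ) (hn : 0 < n) (m : ℕ) :
    Jid k n hn m = Ideal.span
      ((fun e => monomial e (1:k)) '' {e | ∃ t, t < m ∧ e = EM n hn t}) := by
  unfold Jid
  congr 1
  ext q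
  constructor
  · rintro ⟨t, htm, rfl⟩; exact ⟨EM n hn t, ⟨t, htm, rfl⟩, rfl⟩
  · rintro ⟨e, ⟨t, htm, rfl⟩, rfl⟩; exact ⟨t, htm, rfl⟩

lemma cancel {n : ℕ} (hn : 0 < n) {m t0 : ℕ} (hmt : m ≤ t0) (ht0 : t0 + 1 < n)
    (p : MvPolynomial (Fin n ⊕ Fin n) k) (h : Mp k n hn t0 * p ∈ Jid k n hn m) :
    p ∈ Jid k n hn m := by
  rw [Jid_eq_image, mem_ideal_span_monomial_image] at h ⊢
  intro u hu
  have hmem : EM n hn t0 + u ∈ (Mp k n hn t0 * p).support := by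
    rw [MvPolynomial.mem_support_iff, Mp, coeff_monomial_mul, one_mul]
    exact MvPolynomial.mem_support_iff.mp hu
  obtain ⟨s, hs, hle⟩ := h _ hmem
  obtain ⟨t, htm, rfl⟩ := hs
  refine ⟨EM n hn t, ⟨t, htm, rfl⟩, ?_⟩
  intro i
  have h2 := hle i
  rw [Finsupp.add_apply] at h2
  by_cases hz : EM n hn t i = 0
  · simp [hz]
  · rwa [EM_disj hn (by omega) ht0 (by omega) i hz, zero_add] at h2

lemma syz {n : ℕ} (hn : 0 < n) : ∀ (m : ℕ), m + 1 ≤ n →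
    ∀ (a : ℕ → MvPolynomial (Fin n ⊕ Fin n) k),
    (∑ t ∈ Finset.range m, a t * Mp k n hn t) = 0 →
    ∃ c : ℕ → ℕ → MvPolynomial (Fin n ⊕ Fin n) k,
      (∀ t, t < m → a t = ∑ s ∈ Finset.range m, c t s * Mp k n hn s) ∧
      (∀ t s, c t s = - c s t) ∧ (∀ t, c t t = 0) ∧
      (∀ t s, m ≤ t ∨ m ≤ s → c t s = 0) := by
  intro m
  induction m with
  | zero =>
    intro _ a _
    exact ⟨fun _ _ => 0, fun t ht => absurd ht (by omega), by simp, by simp, by simp⟩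
  | succ m ih =>
    intro hm1 a ha
    rw [Finset.sum_range_succ] at ha
    have hmem : Mp k n hn m * a m ∈ Jid k n hn m := by
      rw [mul_comm]
      have h0 : a m * Mp k n hn m = - ∑ t ∈ Finset.range m, a t * Mp k n hn t := by
        linear_combination ha
      rw [h0]
      refine neg_mem (Ideal.sum_mem _ fun t htm => ?_)
      exact Ideal.mul_mem_left _ _ (Ideal.subset_span ⟨t, Finset.mem_range.mp htm, rfl⟩)
    have ham : a m ∈ Jid k n hn m := cancel hn le_rfl (by omega) _ hmem
    obtain ⟨d0, hd0⟩ := mem_span_iff.mp ham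
    set d : ℕ → MvPolynomial (Fin n ⊕ Fin n) k := fun t => if t < m then d0 t else 0 with hd
    have hdz : ∀ r, ¬ r < m → d r = 0 := fun r hr => by rw [hd]; simp [hr]
    have hdm : a m = ∑ s ∈ Finset.range m, d s * Mp k n hn s := by
      rw [hd0]
      exact Finset.sum_congr rfl fun s hs => by
        rw [hd]; simp [Finset.mem_range.mp hs]
    set a' : ℕ → MvPolynomial (Fin n ⊕ Fin n) k :=
      fun t => a t + d t * Mp k n hn m with ha'
    have ha'0 : (∑ t ∈ Finset.range m, a' t * Mp k n hn t) = 0 := by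
      have h1 : ∑ t ∈ Finset.range m, a' t * Mp k n hn t
          = (∑ t ∈ Finset.range m, a t * Mp k n hn t)
            + (∑ t ∈ Finset.range m, d t * Mp k n hn t) * Mp k n hn m := by
        rw [Finset.sum_mul, ← Finset.sum_add_distrib]
        exact Finset.sum_congr rfl fun t _ => by rw [ha']; ring
      rw [h1, ← hdm]
      linear_combination ha
    obtain ⟨c', hc'1, hc'2, hc'3, hc'4⟩ := ih (by omega) a' ha'0
    refine ⟨fun t s => c' t s + (if s = m then - d t else 0) + (if t = m then d s else 0),
      ?_, ?_, ?_, ?_⟩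
    · intro t htm1
      rw [Finset.sum_range_succ]
      by_cases htm : t < m
      · have hinner : ∀ s ∈ Finset.range m,
            ((c' t s + if s = m then - d t else 0) + if t = m then d s else 0) * Mp k n hn s
              = c' t s * Mp k n hn s := by
          intro s hs
          rw [if_neg (by have := Finset.mem_range.mp hs; omega : ¬ s = m),
            if_neg (by omega : ¬ t = m)]
          ring
        rw [Finset.sum_congr rfl hinner]
        have houter : ((c' t m + if m = m then - d t else 0) + if t = m then d m else 0)
            = - d t := by
          rw [hc'4 t m (Or.inr le_rfl), if_pos rfl, if_neg (by omega : ¬ t = m)]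
          ring
        dsimp only
        rw [houter]
        have h1 : a t + d t * Mp k n hn m = ∑ s ∈ Finset.range m, c' t s * Mp k n hn s := by
          rw [← hc'1 t htm, ha']
        linear_combination h1
      · have ht' : t = m := by omega
        subst ht'
        have hinner : ∀ s ∈ Finset.range t,
            ((c' t s + if s = t then - d t else 0) + if t = t then d s else 0) * Mp k n hn s
              = d s * Mp k n hn s := by
          intro s hs
          rw [hc'4 t s (Or.inl le_rfl),
            if_neg (by have := Finset.mem_range.mp hs; omega : ¬ s = t), if_pos rfl]
          ring
        rw [Finset.sum_congr rfl hinner]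
        have houter : ((c' t t + if t = t then - d t else 0) + if t = t then d t else 0) = 0 := by
          rw [hc'3, if_pos rfl, if_pos rfl]; ring
        dsimp only
        rw [houter, ← hdm]
        ring
    · intro t s
      dsimp only
      rw [hc'2 t s]
      split_ifs <;> ring
    · intro t
      dsimp only
      rw [hc'3]
      split_ifs <;> ring
    · intro t s hts
      dsimp only
      rw [hc'4 t s (by omega)]
      by_cases hs : s = m <;> by_cases ht : t = m
      · omega
      · rw [if_pos hs, if_neg ht, hdz t (by omega)]; ring
      · rw [if_neg hs, if_pos ht, hdz s (by omega)]; ring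
      · rw [if_neg hs, if_neg ht]; ring


lemma comp_mul_Mp_ge {n : ℕ} (hn : 0 < n) {t : ℕ} (ht : t + 1 < n)
    (p : MvPolynomial (Fin n ⊕ Fin n) k) {d : ℕ} (hd : n - t ≤ d) :
    weightedHomogeneousComponent (wt n) d (p * Mp k n hn t)
      = weightedHomogeneousComponent (wt n) (d - (n - t)) p * Mp k n hn t := by
  have h1 := comp_mul_homog (Mp_hom hn ht) p (d - (n - t))
  rwa [show (n - t) + (d - (n - t)) = d by omega] at h1

lemma comp_mul_Mp_lt {n : ℕ} (hn : 0 < n) {t : ℕ} (ht : t + 1 < n)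
    (p : MvPolynomial (Fin n ⊕ Fin n) k) {d : ℕ} (hd : d < n - t) :
    weightedHomogeneousComponent (wt n) d (p * Mp k n hn t) = 0 :=
  comp_mul_homog_lt (Mp_hom hn ht) p hd

lemma comp_mul_Np_ge {n : ℕ} (hn : 0 < n) {t : ℕ} (ht : t + 1 < n)
    (p : MvPolynomial (Fin n ⊕ Fin n) k) {d : ℕ} (hd : n - (t + 1) ≤ d) :
    weightedHomogeneousComponent (wt n) d (p * Np k n hn t)
      = weightedHomogeneousComponent (wt n) (d - (n - (t + 1))) p * Np k n hn t := by
  have h1 := comp_mul_homog (Np_hom hn ht) p (d - (n - (t + 1)))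
  rwa [show (n - (t + 1)) + (d - (n - (t + 1))) = d by omega] at h1

lemma comp_mul_Np_lt {n : ℕ} (hn : 0 < n) {t : ℕ} (ht : t + 1 < n)
    (p : MvPolynomial (Fin n ⊕ Fin n) k) {d : ℕ} (hd : d < n - (t + 1)) :
    weightedHomogeneousComponent (wt n) d (p * Np k n hn t) = 0 :=
  comp_mul_homog_lt (Np_hom hn ht) p hd

lemma mem_support_sum {σ' : Type*} {ι : Type*} {s : Finset ι}
    {f : ι → MvPolynomial σ' k} {u : σ' →₀ ℕ} (hu : u ∈ (∑ i ∈ s, f i).support) :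
    ∃ i ∈ s, u ∈ (f i).support := by
  classical
  by_contra hc
  push_neg at hc
  apply MvPolynomial.mem_support_iff.mp hu
  rw [MvPolynomial.coeff_sum]
  exact Finset.sum_eq_zero fun i hi => by simpa using hc i hi

/-- The key Gröbner-type lemma: the top weighted-homogeneous component of an element
of the ideal of consecutive minors lies in the corresponding monomial ideal. -/
lemma key {n : ℕ} (hn : 0 < n) {m : ℕ} (hm : m + 1 ≤ n) :
    ∀ μ : ℕ, ∀ h : ℕ → MvPolynomial (Fin n ⊕ Fin n) k,
    (∀ t, t < m → ∀ u ∈ (h t).support, Finsupp.weight (wt n) u + (n - t) ≤ μ) →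
    ∀ D : ℕ,
    (∀ d, D < d → weightedHomogeneousComponent (wt n) d
      (∑ t ∈ Finset.range m, h t * Dp k n hn t) = 0) →
    weightedHomogeneousComponent (wt n) D
      (∑ t ∈ Finset.range m, h t * Dp k n hn t) ≠ 0 →
    weightedHomogeneousComponent (wt n) D
      (∑ t ∈ Finset.range m, h t * Dp k n hn t) ∈ Jid k n hn m := by
  intro μ
  induction μ using Nat.strong_induction_on with
  | _ μ IH =>
  intro h hb D htop hne
  have htn : ∀ t, t < m → t + 1 < n := fun t ht => by omega
  -- the component of degree d of each summand, for d ≥ μ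
  have hterm : ∀ d, μ ≤ d → ∀ t, t < m →
      weightedHomogeneousComponent (wt n) d (h t * Dp k n hn t)
        = weightedHomogeneousComponent (wt n) (d - (n - t)) (h t) * Mp k n hn t := by
    intro d hd t htm
    by_cases h0 : h t = 0
    · simp [h0]
    obtain ⟨u0, hu0⟩ := (MvPolynomial.ne_zero_iff.mp h0)
    have he1 : n - t ≤ μ := by
      have := hb t htm u0 (MvPolynomial.mem_support_iff.mpr hu0); omega
    have hDp : h t * Dp k n hn t = h t * Mp k n hn t - h t * Np k n hn t := by
      simp only [Dp]; ring
    rw [hDp, map_sub, comp_mul_Mp_ge hn (htn t htm) _ (by omega),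
      comp_mul_Np_ge hn (htn t htm) _ (by omega)]
    have hz : weightedHomogeneousComponent (wt n) (d - (n - (t + 1))) (h t) = 0 := by
      apply comp_eq_zero_of_bound (w := wt n) (D := μ - (n - t))
      · intro u hu; have := hb t htm u hu; omega
      · have h1 : t + 1 < n := htn t htm
        omega
    rw [hz, zero_mul, sub_zero]
  have hvanish : ∀ d, μ < d →
      weightedHomogeneousComponent (wt n) d
        (∑ t ∈ Finset.range m, h t * Dp k n hn t) = 0 := by
    intro d hd
    rw [map_sum]
    refine Finset.sum_eq_zero fun t ht => ?_
    have htm := Finset.mem_range.mp ht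
    rw [hterm d (by omega) t htm]
    have hz : weightedHomogeneousComponent (wt n) (d - (n - t)) (h t) = 0 := by
      by_cases h0 : h t = 0
      · simp [h0]
      obtain ⟨u0, hu0⟩ := (MvPolynomial.ne_zero_iff.mp h0)
      have he1 : n - t ≤ μ := by
        have := hb t htm u0 (MvPolynomial.mem_support_iff.mpr hu0); omega
      apply comp_eq_zero_of_bound (w := wt n) (D := μ - (n - t))
      · intro u hu; have := hb t htm u hu; omega
      · omega
    rw [hz, zero_mul]
  have hDle : D ≤ μ := by
    by_contra hcon
    exact hne (hvanish D (by omega))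
  have hma : weightedHomogeneousComponent (wt n) μ
      (∑ t ∈ Finset.range m, h t * Dp k n hn t)
        = ∑ t ∈ Finset.range m,
            weightedHomogeneousComponent (wt n) (μ - (n - t)) (h t) * Mp k n hn t := by
    rw [map_sum]
    exact Finset.sum_congr rfl fun t ht =>
      hterm μ le_rfl t (Finset.mem_range.mp ht)
  by_cases hDeq : D = μ
  · subst hDeq
    rw [hma]
    exact Ideal.sum_mem _ fun t ht => Ideal.mul_mem_left _ _
      (Ideal.subset_span ⟨t, Finset.mem_range.mp ht, rfl⟩)
  · -- cancellation in top degree: use the syzygy lemma to rewrite with smaller top weight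
    have hμpos : D < μ := by omega
    have hμ0 : (∑ t ∈ Finset.range m,
        weightedHomogeneousComponent (wt n) (μ - (n - t)) (h t) * Mp k n hn t) = 0 := by
      rw [← hma]; exact htop μ hμpos
    obtain ⟨c, hc1, hc2, hc3, _hc4⟩ :=
      syz hn m hm (fun t => weightedHomogeneousComponent (wt n) (μ - (n - t)) (h t)) hμ0
    set c₂ : ℕ → ℕ → MvPolynomial (Fin n ⊕ Fin n) k := fun t s =>
      if (n - t) + (n - s) ≤ μ then
        weightedHomogeneousComponent (wt n) (μ - (n - t) - (n - s)) (c t s) else 0 with hc₂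
    have hc₂anti : ∀ t s, c₂ t s = - c₂ s t := by
      intro t s
      rw [hc₂]
      dsimp only
      by_cases hcond : (n - t) + (n - s) ≤ μ
      · rw [if_pos hcond, if_pos (by omega), hc2 t s, map_neg,
          show μ - (n - t) - (n - s) = μ - (n - s) - (n - t) by omega]
      · rw [if_neg hcond, if_neg (by omega), neg_zero]
    have hc₂diag : ∀ t, c₂ t t = 0 := by
      intro t
      rw [hc₂]
      dsimp only
      split_ifs with hcond
      · rw [hc3, map_zero]
      · rfl
    have hc₂row : ∀ t, t < m →
        weightedHomogeneousComponent (wt n) (μ - (n - t)) (h t)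
          = ∑ s ∈ Finset.range m, c₂ t s * Mp k n hn s := by
      intro t htm
      have h1 : weightedHomogeneousComponent (wt n) (μ - (n - t)) (h t)
          = weightedHomogeneousComponent (wt n) (μ - (n - t))
              (weightedHomogeneousComponent (wt n) (μ - (n - t)) (h t)) :=
        (comp_idem _ _).symm
      rw [h1, hc1 t htm, map_sum]
      refine Finset.sum_congr rfl fun s hs => ?_
      have hsm := Finset.mem_range.mp hs
      have hsn : s + 1 < n := htn s hsm
      by_cases hcond : (n - t) + (n - s) ≤ μ
      · rw [comp_mul_Mp_ge hn hsn _ (by omega), hc₂]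
        dsimp only
        rw [if_pos hcond, show μ - (n - t) - (n - s) = μ - (n - t) - (n - s) from rfl]
      · rw [comp_mul_Mp_lt hn hsn _ (by omega), hc₂]
        dsimp only
        rw [if_neg hcond, zero_mul]
    -- the new coefficient family
    set h' : ℕ → MvPolynomial (Fin n ⊕ Fin n) k := fun t =>
      (h t - weightedHomogeneousComponent (wt n) (μ - (n - t)) (h t))
        + ∑ s ∈ Finset.range m, c₂ t s * Np k n hn s with hh'
    have hdouble0 : ∑ p ∈ Finset.range m ×ˢ Finset.range m,
        c₂ p.1 p.2 * (Dp k n hn p.2 * Dp k n hn p.1) = 0 := by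
      apply Finset.sum_involution (fun p _ => (p.2, p.1))
      · intro p _
        rw [hc₂anti p.2 p.1]
        ring
      · intro p _ hfp hcon
        apply hfp
        have h12 : p.1 = p.2 := congrArg Prod.snd hcon
        rw [show p.2 = p.1 from h12.symm, hc₂diag, zero_mul]
      · intro p hp
        rw [Finset.mem_product] at hp ⊢
        exact ⟨hp.2, hp.1⟩
      · intro p _
        rfl
    have hkey2 : ∑ t ∈ Finset.range m,
        weightedHomogeneousComponent (wt n) (μ - (n - t)) (h t) * Dp k n hn t
          = ∑ t ∈ Finset.range m,
              (∑ s ∈ Finset.range m, c₂ t s * Np k n hn s) * Dp k n hn t := by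
      have hL : ∑ t ∈ Finset.range m,
          weightedHomogeneousComponent (wt n) (μ - (n - t)) (h t) * Dp k n hn t
            = (∑ t ∈ Finset.range m, ∑ s ∈ Finset.range m,
                c₂ t s * (Dp k n hn s * Dp k n hn t))
              + ∑ t ∈ Finset.range m, ∑ s ∈ Finset.range m,
                  c₂ t s * (Np k n hn s * Dp k n hn t) := by
        rw [← Finset.sum_add_distrib]
        refine Finset.sum_congr rfl fun t ht => ?_
        rw [← Finset.sum_add_distrib, hc₂row t (Finset.mem_range.mp ht), Finset.sum_mul]
        refine Finset.sum_congr rfl fun s hs => ?_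
        have hMD : Mp k n hn s = Dp k n hn s + Np k n hn s := by
          simp only [Dp]; ring
        rw [mul_assoc, hMD]
        ring
      rw [hL]
      have hz : (∑ t ∈ Finset.range m, ∑ s ∈ Finset.range m,
          c₂ t s * (Dp k n hn s * Dp k n hn t)) = 0 := by
        rw [← Finset.sum_product']
        exact hdouble0
      rw [hz, zero_add]
      refine Finset.sum_congr rfl fun t ht => ?_
      rw [Finset.sum_mul]
      exact Finset.sum_congr rfl fun s hs => (mul_assoc _ _ _).symm
    have hGeq : ∑ t ∈ Finset.range m, h' t * Dp k n hn t
        = ∑ t ∈ Finset.range m, h t * Dp k n hn t := by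
      have hsplit : ∀ t ∈ Finset.range m, h' t * Dp k n hn t
          = h t * Dp k n hn t
            - weightedHomogeneousComponent (wt n) (μ - (n - t)) (h t) * Dp k n hn t
            + (∑ s ∈ Finset.range m, c₂ t s * Np k n hn s) * Dp k n hn t := by
        intro t _
        rw [hh']
        ring
      rw [Finset.sum_congr rfl hsplit, Finset.sum_add_distrib, Finset.sum_sub_distrib]
      linear_combination - hkey2
    -- bound for the new family
    have hb' : ∀ t, t < m → ∀ u ∈ (h' t).support,
        Finsupp.weight (wt n) u + (n - t) ≤ μ - 1 := by
      intro t htm u hu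
      rw [hh'] at hu
      dsimp only at hu
      classical
      rcases Finset.mem_union.mp (MvPolynomial.support_add hu) with hu1 | hu2
      · -- support of `h t` minus its top component
        have hu1' : u ∈ (h t).support := by
          rcases Finset.mem_union.mp (MvPolynomial.support_sub _ _ _ hu1) with h1 | h2
          · exact h1
          · exact support_comp_subset _ _ h2
        have hle : Finsupp.weight (wt n) u + (n - t) ≤ μ := hb t htm u hu1'
        have he1 : n - t ≤ μ := by omega
        by_cases heq : Finsupp.weight (wt n) u = μ - (n - t)
        · exfalso
          rw [MvPolynomial.mem_support_iff] at hu1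
          apply hu1
          classical
          rw [MvPolynomial.coeff_sub, coeff_weightedHomogeneousComponent, if_pos heq, sub_self]
        · omega
      · -- support of the correction term
        obtain ⟨s, hs, hus⟩ := mem_support_sum hu2
        have hsm := Finset.mem_range.mp hs
        have hsn : s + 1 < n := htn s hsm
        by_cases hcond : (n - t) + (n - s) ≤ μ
        · have hc₂s : c₂ t s = weightedHomogeneousComponent (wt n)
              (μ - (n - t) - (n - s)) (c t s) := by
            rw [hc₂]; dsimp only; rw [if_pos hcond]
          classical
          have := MvPolynomial.support_mul _ _ hus
          rw [Finset.mem_add] at this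
          obtain ⟨v, hv, e, he, rfl⟩ := this
          have hwv : Finsupp.weight (wt n) v = μ - (n - t) - (n - s) := by
            rw [hc₂s] at hv
            exact weightedHomogeneousComponent_isWeightedHomogeneous _ _
              (MvPolynomial.mem_support_iff.mp hv)
          have hwe : Finsupp.weight (wt n) e = n - (s + 1) := by
            have hsupp : (Np k n hn s : MvPolynomial (Fin n ⊕ Fin n) k).support = {EN n hn s} := by
              rw [Np, MvPolynomial.support_monomial, if_neg one_ne_zero]
            rw [hsupp, Finset.mem_singleton] at he
            rw [he]
            exact weight_EN hn hsn
          rw [map_add, hwv, hwe]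
          omega
        · have hc₂z : c₂ t s = 0 := by
            rw [hc₂]; dsimp only; rw [if_neg hcond]
          rw [hc₂z, zero_mul] at hus
          simp at hus
    have hfin := IH (μ - 1) (by omega) h' hb' D ?_ ?_
    · rw [hGeq] at hfin
      exact hfin
    · intro d hd
      rw [hGeq]
      exact htop d hd
    · rw [hGeq]
      exact hne


/-- The ideal generated by the first `m` consecutive minors. -/
noncomputable def Did (k : Type*) [Field k] (n : ℕ) (hn : 0 < n) (m : ℕ) :
    Ideal (MvPolynomial (Fin n ⊕ Fin n) k) :=
  Ideal.span {q | ∃ t, t < m ∧ q = Dp k n hn t}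

lemma main_aux {n : ℕ} (hn : 0 < n) {m : ℕ} (hm : m + 1 < n) :
    ∀ (W : ℕ) (f : MvPolynomial (Fin n ⊕ Fin n) k),
    (∀ u ∈ f.support, Finsupp.weight (wt n) u ≤ W) →
    Dp k n hn m * f ∈ Did k n hn m → f ∈ Did k n hn m := by
  intro W
  induction W using Nat.strong_induction_on with
  | _ W IHW =>
  intro f hfb hmem
  by_cases hf0 : f = 0
  · rw [hf0]; exact zero_mem _
  have hsupp : f.support.Nonempty := by
    rwa [Finset.nonempty_iff_ne_empty, Ne, MvPolynomial.support_eq_empty]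
  set D := f.support.sup (fun u => Finsupp.weight (wt n) u) with hD
  have hDle : ∀ u ∈ f.support, Finsupp.weight (wt n) u ≤ D :=
    fun u hu => Finset.le_sup hu
  have hDW : D ≤ W := Finset.sup_le hfb
  obtain ⟨u0, hu0, hu0eq⟩ := Finset.exists_mem_eq_sup f.support hsupp
    (fun u => Finsupp.weight (wt n) u)
  have hcD : weightedHomogeneousComponent (wt n) D f ≠ 0 := by
    intro hz
    have h1 := congrArg (coeff u0) hz
    classical
    rw [coeff_weightedHomogeneousComponent, if_pos hu0eq.symm, coeff_zero] at h1
    exact (MvPolynomial.mem_support_iff.mp hu0) h1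
  obtain ⟨h, hh⟩ := mem_span_iff.mp hmem
  set μ := Finset.sup (Finset.range m)
    (fun t => ((h t).support.sup (fun u => Finsupp.weight (wt n) u)) + (n - t)) with hμ
  have hbh : ∀ t, t < m → ∀ u ∈ (h t).support,
      Finsupp.weight (wt n) u + (n - t) ≤ μ := by
    intro t htm u hu
    have h1 : Finsupp.weight (wt n) u
        ≤ (h t).support.sup (fun u => Finsupp.weight (wt n) u) := Finset.le_sup hu
    have h2 : ((h t).support.sup (fun u => Finsupp.weight (wt n) u)) + (n - t) ≤ μ :=
      Finset.le_sup
        (f := fun t => ((h t).support.sup (fun u => Finsupp.weight (wt n) u)) + (n - t))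
        (Finset.mem_range.mpr htm)
    omega
  have hexp : Dp k n hn m * f = f * Mp k n hn m - f * Np k n hn m := by
    simp only [Dp]; ring
  have hbig : ∀ d, D + (n - m) < d →
      weightedHomogeneousComponent (wt n) d (Dp k n hn m * f) = 0 := by
    intro d hd
    rw [hexp, map_sub]
    rw [comp_mul_Mp_ge hn hm f (show n - m ≤ d by omega),
      comp_mul_Np_ge hn hm f (show n - (m + 1) ≤ d by omega)]
    have hz1 : weightedHomogeneousComponent (wt n) (d - (n - m)) f = 0 :=
      comp_eq_zero_of_bound hDle (show D < d - (n - m) by omega)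
    have hz2 : weightedHomogeneousComponent (wt n) (d - (n - (m + 1))) f = 0 :=
      comp_eq_zero_of_bound hDle (show D < d - (n - (m + 1)) by omega)
    rw [hz1, hz2, zero_mul, zero_mul, sub_zero]
  have htopg : weightedHomogeneousComponent (wt n) (D + (n - m)) (Dp k n hn m * f)
      = weightedHomogeneousComponent (wt n) D f * Mp k n hn m := by
    rw [hexp, map_sub]
    rw [comp_mul_Mp_ge hn hm f (show n - m ≤ D + (n - m) by omega),
      comp_mul_Np_ge hn hm f (show n - (m + 1) ≤ D + (n - m) by omega)]
    rw [show D + (n - m) - (n - m) = D by omega,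
      show D + (n - m) - (n - (m + 1)) = D + 1 by omega]
    have hz1 : weightedHomogeneousComponent (wt n) (D + 1) f = 0 :=
      comp_eq_zero_of_bound hDle (by omega)
    rw [hz1, zero_mul, sub_zero]
  have hGne : weightedHomogeneousComponent (wt n) (D + (n - m)) (Dp k n hn m * f) ≠ 0 := by
    rw [htopg]
    exact mul_ne_zero hcD (Mp_ne_zero hn m)
  have hres := key hn (by omega : m + 1 ≤ n) μ h hbh (D + (n - m))
    (fun d hd => by rw [← hh]; exact hbig d hd) (by rw [← hh]; exact hGne)
  rw [← hh, htopg] at hres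
  have hcf : weightedHomogeneousComponent (wt n) D f ∈ Jid k n hn m :=
    cancel hn le_rfl hm _ (by rw [mul_comm]; exact hres)
  obtain ⟨q, hq⟩ := mem_span_iff.mp hcf
  set q' : ℕ → MvPolynomial (Fin n ⊕ Fin n) k := fun t =>
    if n - t ≤ D then weightedHomogeneousComponent (wt n) (D - (n - t)) (q t) else 0 with hq'
  have hq2 : weightedHomogeneousComponent (wt n) D f
      = ∑ t ∈ Finset.range m, q' t * Mp k n hn t := by
    have h1 : weightedHomogeneousComponent (wt n) D f
        = weightedHomogeneousComponent (wt n) D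
            (weightedHomogeneousComponent (wt n) D f) := (comp_idem _ _).symm
    rw [h1, hq, map_sum]
    refine Finset.sum_congr rfl fun t ht => ?_
    have htn : t + 1 < n := by have := Finset.mem_range.mp ht; omega
    by_cases hcond : n - t ≤ D
    · rw [comp_mul_Mp_ge hn htn _ hcond, hq']
      dsimp only
      rw [if_pos hcond]
    · rw [comp_mul_Mp_lt hn htn _ (by omega), hq']
      dsimp only
      rw [if_neg hcond, zero_mul]
  set f₁ := f - ∑ t ∈ Finset.range m, q' t * Dp k n hn t with hf₁
  have hsummem : (∑ t ∈ Finset.range m, q' t * Dp k n hn t) ∈ Did k n hn m :=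
    Ideal.sum_mem _ fun t ht => Ideal.mul_mem_left _ _
      (Ideal.subset_span ⟨t, Finset.mem_range.mp ht, rfl⟩)
  have hf₁mem : Dp k n hn m * f₁ ∈ Did k n hn m := by
    have hexp2 : Dp k n hn m * f₁ = Dp k n hn m * f
        - Dp k n hn m * (∑ t ∈ Finset.range m, q' t * Dp k n hn t) := by
      rw [hf₁]; ring
    rw [hexp2]
    exact sub_mem hmem (Ideal.mul_mem_left _ _ hsummem)
  have hsplit : f₁ = (f - weightedHomogeneousComponent (wt n) D f)
      + ∑ t ∈ Finset.range m, q' t * Np k n hn t := by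
    have h2 : ∀ t ∈ Finset.range m, q' t * Dp k n hn t
        = q' t * Mp k n hn t - q' t * Np k n hn t := by
      intro t _; simp only [Dp]; ring
    rw [hf₁, Finset.sum_congr rfl h2, Finset.sum_sub_distrib, ← hq2]
    ring
  have hf₁b : ∀ u ∈ f₁.support, Finsupp.weight (wt n) u < D := by
    intro u hu
    rw [hsplit] at hu
    classical
    rcases Finset.mem_union.mp (MvPolynomial.support_add hu) with hu1 | hu2
    · have hu1' : u ∈ f.support := by
        rcases Finset.mem_union.mp (MvPolynomial.support_sub _ _ _ hu1) with h1 | h2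
        · exact h1
        · exact support_comp_subset _ _ h2
      have hle := hDle u hu1'
      by_cases heq : Finsupp.weight (wt n) u = D
      · exfalso
        rw [MvPolynomial.mem_support_iff] at hu1
        apply hu1
        rw [MvPolynomial.coeff_sub, coeff_weightedHomogeneousComponent, if_pos heq, sub_self]
      · omega
    · obtain ⟨t, ht, hut⟩ := mem_support_sum hu2
      have htm := Finset.mem_range.mp ht
      have htn : t + 1 < n := by omega
      by_cases hcond : n - t ≤ D
      · have hq's : q' t = weightedHomogeneousComponent (wt n) (D - (n - t)) (q t) := by
          rw [hq']; dsimp only; rw [if_pos hcond]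
        have := MvPolynomial.support_mul _ _ hut
        rw [Finset.mem_add] at this
        obtain ⟨v, hv, e, he, rfl⟩ := this
        have hwv : Finsupp.weight (wt n) v = D - (n - t) := by
          rw [hq's] at hv
          exact weightedHomogeneousComponent_isWeightedHomogeneous _ _
            (MvPolynomial.mem_support_iff.mp hv)
        have hwe : Finsupp.weight (wt n) e = n - (t + 1) := by
          have hsupp2 : (Np k n hn t : MvPolynomial (Fin n ⊕ Fin n) k).support
              = {EN n hn t} := by
            rw [Np, MvPolynomial.support_monomial, if_neg one_ne_zero]
          rw [hsupp2, Finset.mem_singleton] at he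
          rw [he]
          exact weight_EN hn htn
        rw [map_add, hwv, hwe]
        omega
      · have hq'z : q' t = 0 := by
          rw [hq']; dsimp only; rw [if_neg hcond]
        rw [hq'z, zero_mul] at hut
        simp at hut
  by_cases hD0 : D = 0
  · have hf₁0 : f₁ = 0 := by
      rw [← MvPolynomial.support_eq_empty]
      rw [Finset.eq_empty_iff_forall_notMem]
      intro u hu
      have := hf₁b u hu
      omega
    have : f = ∑ t ∈ Finset.range m, q' t * Dp k n hn t := by
      have h3 : f - ∑ t ∈ Finset.range m, q' t * Dp k n hn t = 0 := by rw [← hf₁, hf₁0]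
      linear_combination h3
    rw [this]
    exact hsummem
  · have hf₁in : f₁ ∈ Did k n hn m :=
      IHW (D - 1) (by omega) f₁ (fun u hu => by have := hf₁b u hu; omega) hf₁mem
    have : f = f₁ + ∑ t ∈ Finset.range m, q' t * Dp k n hn t := by
      rw [hf₁]; ring
    rw [this]
    exact add_mem hf₁in hsummem

lemma main {n : ℕ} (hn : 0 < n) {m : ℕ} (hm : m + 1 < n)
    (f : MvPolynomial (Fin n ⊕ Fin n) k)
    (hmem : Dp k n hn m * f ∈ Did k n hn m) : f ∈ Did k n hn m :=
  main_aux hn hm (f.support.sup (fun u => Finsupp.weight (wt n) u)) f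
    (fun _ hu => Finset.le_sup hu) hmem


lemma smul_top_eq {R : Type*} [CommRing R] (I : Ideal R) :
    (I • ⊤ : Submodule R R) = I := by
  rw [smul_eq_mul, Ideal.mul_top]

lemma reg_of {R : Type*} [CommRing R] (I : Ideal R) (r : R)
    (H : ∀ f, r * f ∈ I → f ∈ I) :
    IsSMulRegular (R ⧸ (I • ⊤ : Submodule R R)) r := by
  intro a b hab
  obtain ⟨x, rfl⟩ := Submodule.Quotient.mk_surjective _ a
  obtain ⟨y, rfl⟩ := Submodule.Quotient.mk_surjective _ b
  simp only [← Submodule.Quotient.mk_smul] at hab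
  rw [Submodule.Quotient.eq] at hab ⊢
  rw [smul_top_eq] at hab ⊢
  have h1 : r * (x - y) ∈ I := by
    have : r • x - r • y = r * (x - y) := by simp [smul_eq_mul]; ring
    rwa [this] at hab
  exact H _ h1

lemma EM_ne_zero {n : ℕ} (hn : 0 < n) (t : ℕ) : EM n hn t ≠ 0 := by
  intro h
  have h1 := congrFun (congrArg DFunLike.coe h) (Sum.inl (fi n hn t))
  simp [EM, Finsupp.single_apply] at h1

lemma EN_ne_zero {n : ℕ} (hn : 0 < n) (t : ℕ) : EN n hn t ≠ 0 := by
  intro h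
  have h1 := congrFun (congrArg DFunLike.coe h) (Sum.inl (fi n hn (t + 1)))
  simp [EN, Finsupp.single_apply] at h1

lemma constantCoeff_Dp {n : ℕ} (hn : 0 < n) (t : ℕ) :
    constantCoeff (Dp k n hn t) = 0 := by
  simp only [Dp, Mp, Np, map_sub, constantCoeff_monomial]
  rw [if_neg (EM_ne_zero hn t), if_neg (EN_ne_zero hn t), sub_zero]

lemma one_not_mem_Did {n : ℕ} (hn : 0 < n) (m : ℕ) :
    (1 : MvPolynomial (Fin n ⊕ Fin n) k) ∉ Did k n hn m := by
  intro h
  have hle : Did k n hn m ≤ RingHom.ker (constantCoeff (R := k) (σ := Fin n ⊕ Fin n)) := by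
    rw [Did, Ideal.span_le]
    rintro q ⟨t, _, rfl⟩
    exact constantCoeff_Dp hn t
  have h1 := hle h
  rw [RingHom.mem_ker, map_one] at h1
  exact one_ne_zero h1

lemma Dp_eq {n : ℕ} (hn : 0 < n) {t : ℕ} (ht : t + 1 < n) :
    Δ k n ⟨t, by omega⟩ ⟨t + 1, ht⟩ = Dp k n hn t := by
  have hfi1 : fi n hn t = ⟨t, by omega⟩ := Fin.ext (fi_val hn (by omega))
  have hfi2 : fi n hn (t + 1) = ⟨t + 1, ht⟩ := Fin.ext (fi_val hn ht)
  have hXX : ∀ (a b : Fin n ⊕ Fin n), (X a : MvPolynomial (Fin n ⊕ Fin n) k) * X b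
      = monomial (Finsupp.single a 1 + Finsupp.single b 1) 1 := by
    intro a b
    rw [show (X a : MvPolynomial (Fin n ⊕ Fin n) k) = monomial (Finsupp.single a 1) 1 from rfl,
      show (X b : MvPolynomial (Fin n ⊕ Fin n) k) = monomial (Finsupp.single b 1) 1 from rfl,
      monomial_mul, one_mul]
  simp only [Δ, xv, yv, Dp, Mp, Np, EM, EN, hfi1, hfi2, hXX]

lemma consList_eq (n : ℕ) : consList k n = List.ofFn (fun t : Fin (n - 1) =>
    Δ k n ⟨t.1, by have := t.isLt; omega⟩ ⟨t.1 + 1, by have := t.isLt; omega⟩) := rfl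

lemma ofList_take {n : ℕ} (hn : 0 < n) {i : ℕ} (hi : i ≤ n - 1) :
    Ideal.ofList ((consList k n).take i) = Did k n hn i := by
  rw [Did]
  have hset : { r | r ∈ (consList k n).take i } = {q | ∃ t, t < i ∧ q = Dp k n hn t} := by
    ext r
    simp only [Set.mem_setOf_eq]
    have hlen : ((consList k n).take i).length = i := by
      rw [consList_eq, List.length_take, List.length_ofFn]
      omega
    constructor
    · intro hr
      obtain ⟨j, hj, hjr⟩ := List.mem_iff_getElem.mp hr
      rw [hlen] at hj
      refine ⟨j, hj, ?_⟩
      rw [← hjr]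
      simp only [List.getElem_take, consList_eq, List.getElem_ofFn]
      exact Dp_eq hn (by omega)
    · rintro ⟨t, hti, rfl⟩
      apply List.mem_iff_getElem.mpr
      refine ⟨t, by rw [hlen]; exact hti, ?_⟩
      simp only [List.getElem_take, consList_eq, List.getElem_ofFn]
      exact Dp_eq hn (by omega)
  exact congrArg Ideal.span hset

end Stmt3Aux

open Stmt3Aux in
theorem stmt3 (k : Type*) [Field k] (n : ℕ) (hn : 2 ≤ n) :
    RingTheory.Sequence.IsRegular (MvPolynomial (Fin n ⊕ Fin n) k) (consList k n) := by
  have hn0 : 0 < n := by omega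
  have hlen : (consList k n).length = n - 1 := by
    rw [consList_eq, List.length_ofFn]
  refine ⟨⟨fun i hi => ?_⟩, ?_⟩
  · rw [hlen] at hi
    have hgi : (consList k n)[i]'(by rw [hlen]; exact hi) = Dp k n hn0 i := by
      simp only [consList_eq, List.getElem_ofFn]
      exact Dp_eq hn0 (by omega)
    rw [hgi, ofList_take hn0 (by omega)]
    exact reg_of _ _ (fun f hf => main hn0 (by omega) f hf)
  · intro hcon
    have h1 : (1 : MvPolynomial (Fin n ⊕ Fin n) k) ∈
        (Ideal.ofList (consList k n) • ⊤ : Submodule (MvPolynomial (Fin n ⊕ Fin n) k) (MvPolynomial (Fin n ⊕ Fin n) k)) := by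
      rw [← hcon]; trivial
    rw [smul_top_eq] at h1
    have h2 : Ideal.ofList (consList k n) = Did k n hn0 (n - 1) := by
      rw [← ofList_take hn0 le_rfl]
      congr 1
      rw [← hlen, List.take_length]
    rw [h2] at h1
    exact one_not_mem_Did hn0 (n - 1) h1
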